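/- For integers m ≥ 3 and n ≥ m²/2 − 3, the grid P_{m,n} = {1,…,n} × {1,…,m} can be identified by at most ⌈n/2⌉ + m − 1 disks (allowing half-planes as disks). -/

import Mathlib

noncomputable section

/-- The Euclidean plane. -/
abbrev Pt : Type := EuclideanSpace ℝ (Fin 2)

instance : DecidableEq Pt := Classical.decEq _

/-- A disk: a closed Euclidean ball with nonnegative radius. -/
def IsDisk (D : Set Pt) : Prop :=
  ∃ (c : Pt) (r : ℝ), 0 ≤ r ∧ D = Metric.closedBall c r

/-- A family of disks identifies a finite point set: every point is covered and
every pair of distinct points is separated by some disk. -/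
def Identifies (𝒟 : Finset (Set Pt)) (P : Finset Pt) : Prop :=
  (∀ p ∈ P, ∃ D ∈ 𝒟, p ∈ D) ∧
  (∀ p ∈ P, ∀ q ∈ P, p ≠ q → ∃ D ∈ 𝒟, (p ∈ D ∧ q ∉ D) ∨ (q ∈ D ∧ p ∉ D))

/-- Minimum number of disks needed to identify `P`. -/
def gammaID (P : Finset Pt) : ℕ :=
  sInf {k | ∃ 𝒟 : Finset (Set Pt), 𝒟.card = k ∧ (∀ D ∈ 𝒟, IsDisk D) ∧ Identifies 𝒟 P}

/-- A closed half-plane (allowed as a limiting disk). -/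
def IsHalfPlane (H : Set Pt) : Prop :=
  ∃ (u : Pt) (c : ℝ), ‖u‖ = 1 ∧ H = {p : Pt | (inner ℝ p u : ℝ) ≤ c}

/-- The grid `{1,…,n} × {1,…,m}` embedded in the plane. -/
def gridPts (m n : ℕ) : Finset Pt :=
  (Finset.Icc 1 n ×ˢ Finset.Icc 1 m).image (fun q => (WithLp.toLp 2 ![(q.1 : ℝ), (q.2 : ℝ)] : Pt))

/- ======================= auxiliary material ======================= -/

private def mk2 (a b : ℝ) : Pt := WithLp.toLp 2 ![a, b]

private lemma mk2_zero (a b : ℝ) : mk2 a b 0 = a := rfl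
private lemma mk2_one (a b : ℝ) : mk2 a b 1 = b := rfl

private lemma dist_pt (p q : Pt) :
    dist p q = Real.sqrt ((p 0 - q 0)^2 + (p 1 - q 1)^2) := by
  rw [EuclideanSpace.dist_eq, Fin.sum_univ_two]
  simp [Real.dist_eq, sq_abs]

private lemma mem_ball_iff' (a b r2 : ℝ) (hr2 : 0 ≤ r2) (p : Pt) :
    p ∈ Metric.closedBall (mk2 a b) (Real.sqrt r2) ↔
      (p 0 - a)^2 + (p 1 - b)^2 ≤ r2 := by
  rw [Metric.mem_closedBall, dist_pt, Real.sqrt_le_sqrt_iff hr2, mk2_zero, mk2_one]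

/-- lower half-plane `{y ≤ c}`. -/
private def HdnS (c : ℝ) : Set Pt := {p : Pt | p 1 ≤ c}

/-- upper half-plane `{y ≥ 3/2}`. -/
private def HupS : Set Pt := {p : Pt | (3:ℝ)/2 ≤ p 1}

private lemma hdn_halfplane (c : ℝ) : IsHalfPlane (HdnS c) := by
  refine ⟨EuclideanSpace.single 1 (1:ℝ), c, by simp, ?_⟩
  ext p
  simp [HdnS, EuclideanSpace.inner_single_right]

private lemma hup_halfplane : IsHalfPlane HupS := by
  refine ⟨-(EuclideanSpace.single 1 (1:ℝ)), -(3/2), by simp, ?_⟩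
  ext p
  simp only [HupS, Set.mem_setOf_eq, inner_neg_right, EuclideanSpace.inner_single_right]
  constructor <;> intro h <;> simp at h ⊢ <;> linarith

/-- the `k`-th disk. -/
private def diskC (N m : ℕ) (t : ℝ) (k : ℕ) : Set Pt :=
  Metric.closedBall (mk2 ((k:ℝ) + ((N:ℝ)+1)/2 - t) (((m:ℝ)+1)/2))
    (Real.sqrt ((((N:ℝ)-1)/2 + t)^2 + (((m:ℝ)-1)/2)^2))

private lemma diskC_isDisk (N m : ℕ) (t : ℝ) (k : ℕ) : IsDisk (diskC N m t k) :=
  ⟨_, _, Real.sqrt_nonneg _, rfl⟩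

set_option maxHeartbeats 1000000 in
private lemma mem_diskC (N m : ℕ) (t : ℝ) (hN1 : 1 ≤ N)
    (ht0 : 0 ≤ t) (ht4 : t ≤ 1/4)
    (hR : ((m:ℝ)-1)^2 < 4*(N:ℝ) + 8*t)
    (hL : 2 ≤ N → ((m:ℝ)-1)^2 + 8*t*(N:ℝ) < 4*(N:ℝ))
    (k x y : ℕ) (hk : k < N) (hx1 : 1 ≤ x) (hy1 : 1 ≤ y) (hym : y ≤ m) :
    mk2 x y ∈ diskC N m t k ↔ (k + 1 ≤ x ∧ x ≤ k + N) := by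
  unfold diskC
  rw [mem_ball_iff' _ _ _ (by positivity), mk2_zero, mk2_one]
  have hxR : (1:ℝ) ≤ (x:ℝ) := by exact_mod_cast hx1
  have hyR1 : (1:ℝ) ≤ (y:ℝ) := by exact_mod_cast hy1
  have hyRm : (y:ℝ) ≤ (m:ℝ) := by exact_mod_cast hym
  have hNR : (1:ℝ) ≤ (N:ℝ) := by exact_mod_cast hN1
  constructor
  · intro h
    constructor
    · by_contra hc
      push_neg at hc
      have hxk : x ≤ k := by omega
      have hxkR : (x:ℝ) ≤ (k:ℝ) := by exact_mod_cast hxk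
      have hN2 : 2 ≤ N := by omega
      have hL' := hL hN2
      have ha : (0:ℝ) ≤ ((N:ℝ)+1)/2 - t := by linarith
      have hA : ((N:ℝ)+1)/2 - t ≤ -((x:ℝ) - ((k:ℝ) + ((N:ℝ)+1)/2 - t)) := by linarith
      have hsq : (((N:ℝ)+1)/2 - t)^2 ≤ ((x:ℝ) - ((k:ℝ) + ((N:ℝ)+1)/2 - t))^2 := by nlinarith
      nlinarith [sq_nonneg ((y:ℝ) - ((m:ℝ)+1)/2)]
    · by_contra hc
      push_neg at hc
      have hxk : k + N + 1 ≤ x := by omega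
      have hxkR : (k:ℝ) + (N:ℝ) + 1 ≤ (x:ℝ) := by exact_mod_cast hxk
      have ha : (0:ℝ) ≤ ((N:ℝ)+1)/2 + t := by linarith
      have hA : ((N:ℝ)+1)/2 + t ≤ (x:ℝ) - ((k:ℝ) + ((N:ℝ)+1)/2 - t) := by linarith
      have hsq : (((N:ℝ)+1)/2 + t)^2 ≤ ((x:ℝ) - ((k:ℝ) + ((N:ℝ)+1)/2 - t))^2 := by nlinarith
      nlinarith [sq_nonneg ((y:ℝ) - ((m:ℝ)+1)/2)]
  · rintro ⟨h1, h2⟩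
    have h1R : (k:ℝ) + 1 ≤ (x:ℝ) := by exact_mod_cast h1
    have h2R : (x:ℝ) ≤ (k:ℝ) + (N:ℝ) := by
      have : (x:ℝ) ≤ ((k + N : ℕ):ℝ) := by exact_mod_cast h2
      simpa using this
    have hA2 : ((x:ℝ) - ((k:ℝ) + ((N:ℝ)+1)/2 - t))^2 ≤ (((N:ℝ)-1)/2 + t)^2 := by
      apply sq_le_sq' <;> linarith
    have hB2 : ((y:ℝ) - ((m:ℝ)+1)/2)^2 ≤ (((m:ℝ)-1)/2)^2 := by
      apply sq_le_sq' <;> linarith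
    linarith

/- ======================= master construction ======================= -/

private lemma master (m n N : ℕ) (t : ℝ) (hm : 3 ≤ m) (hN1 : 1 ≤ N) (hnN : n ≤ 2*N)
    (ht0 : 0 ≤ t) (ht4 : t ≤ 1/4)
    (hR : ((m:ℝ)-1)^2 < 4*(N:ℝ) + 8*t)
    (hL : 2 ≤ N → ((m:ℝ)-1)^2 + 8*t*(N:ℝ) < 4*(N:ℝ)) :
    ∃ 𝒟 : Finset (Set Pt), (∀ D ∈ 𝒟, IsDisk D ∨ IsHalfPlane D) ∧
      Identifies 𝒟 (gridPts m n) ∧ 𝒟.card ≤ N + m - 1 := by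
  classical
  set 𝒟 : Finset (Set Pt) :=
    ((Finset.range N).image (diskC N m t) ∪ {HupS}) ∪
      (Finset.Ico 2 m).image (fun j : ℕ => HdnS ((j:ℝ) + 1/2)) with h𝒟
  have hDmem : ∀ k, k < N → diskC N m t k ∈ 𝒟 := by
    intro k hk
    rw [h𝒟]
    exact Finset.mem_union_left _ (Finset.mem_union_left _
      (Finset.mem_image_of_mem _ (Finset.mem_range.mpr hk)))
  have hUmem : HupS ∈ 𝒟 := by
    rw [h𝒟]
    exact Finset.mem_union_left _ (Finset.mem_union_right _ (Finset.mem_singleton_self _))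
  have hdnmem : ∀ j : ℕ, 2 ≤ j → j < m → HdnS ((j:ℝ) + 1/2) ∈ 𝒟 := by
    intro j h2 h3
    rw [h𝒟]
    exact Finset.mem_union_right _
      (Finset.mem_image_of_mem _ (Finset.mem_Ico.mpr ⟨h2, h3⟩))
  have hgrid : ∀ p ∈ gridPts m n,
      ∃ x y : ℕ, 1 ≤ x ∧ x ≤ n ∧ 1 ≤ y ∧ y ≤ m ∧ p = mk2 (x:ℝ) (y:ℝ) := by
    intro p hp
    unfold gridPts at hp
    simp only [Finset.mem_image, Finset.mem_product, Finset.mem_Icc] at hp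
    obtain ⟨q, ⟨⟨hx1, hx2⟩, hy1, hy2⟩, rfl⟩ := hp
    exact ⟨q.1, q.2, hx1, hx2, hy1, hy2, rfl⟩
  refine ⟨𝒟, ?_, ⟨?_, ?_⟩, ?_⟩
  · -- disks or half-planes
    intro D hD
    rw [h𝒟] at hD
    rcases Finset.mem_union.mp hD with hD | hD
    · rcases Finset.mem_union.mp hD with hD | hD
      · obtain ⟨k, -, rfl⟩ := Finset.mem_image.mp hD
        exact Or.inl (diskC_isDisk N m t k)
      · rw [Finset.mem_singleton.mp hD]
        exact Or.inr hup_halfplane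
    · obtain ⟨j, -, rfl⟩ := Finset.mem_image.mp hD
      exact Or.inr (hdn_halfplane _)
  · -- coverage
    intro p hp
    obtain ⟨x, y, hx1, hx2, hy1, hy2, rfl⟩ := hgrid p hp
    by_cases hy : 2 ≤ y
    · refine ⟨HupS, hUmem, ?_⟩
      have : (2:ℝ) ≤ (y:ℝ) := by exact_mod_cast hy
      simp only [HupS, Set.mem_setOf_eq, mk2_one]
      linarith
    · have hym : m - 1 < m := by omega
      refine ⟨HdnS (((m-1 : ℕ):ℝ) + 1/2), hdnmem (m-1) (by omega) hym, ?_⟩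
      have h1 : (1:ℝ) ≤ ((m-1 : ℕ):ℝ) := by exact_mod_cast (by omega : 1 ≤ m - 1)
      have hy1' : y = 1 := by omega
      simp only [HdnS, Set.mem_setOf_eq, mk2_one, hy1']
      push_cast
      linarith
  · -- separation
    -- helper for distinct rows
    have sepRow : ∀ x1 y1 x2 y2 : ℕ, 1 ≤ y1 → y2 ≤ m → y1 < y2 →
        ∃ D ∈ 𝒟, (mk2 (x1:ℝ) (y1:ℝ) ∈ D ∧ mk2 (x2:ℝ) (y2:ℝ) ∉ D) ∨
          (mk2 (x2:ℝ) (y2:ℝ) ∈ D ∧ mk2 (x1:ℝ) (y1:ℝ) ∉ D) := by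
      intro x1 y1 x2 y2 hy1 hy2m hlt
      have hy12R : (y1:ℝ) + 1 ≤ (y2:ℝ) := by exact_mod_cast hlt
      by_cases h2 : 2 ≤ y1
      · refine ⟨HdnS ((y1:ℝ) + 1/2), hdnmem y1 h2 (by omega), Or.inl ⟨?_, ?_⟩⟩
        · simp only [HdnS, Set.mem_setOf_eq, mk2_one]; linarith
        · simp only [HdnS, Set.mem_setOf_eq, mk2_one]; push_neg; linarith
      · have hy1' : y1 = 1 := by omega
        refine ⟨HupS, hUmem, Or.inr ⟨?_, ?_⟩⟩
        · have : (2:ℝ) ≤ (y2:ℝ) := by exact_mod_cast (by omega : 2 ≤ y2)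
          simp only [HupS, Set.mem_setOf_eq, mk2_one]; linarith
        · simp only [HupS, Set.mem_setOf_eq, mk2_one, hy1']
          push_neg; norm_num
    -- helper for same row, distinct columns
    have sepCol : ∀ x1 x2 y : ℕ, 1 ≤ x1 → x2 ≤ n → 1 ≤ y → y ≤ m → x1 < x2 →
        ∃ D ∈ 𝒟, (mk2 (x1:ℝ) (y:ℝ) ∈ D ∧ mk2 (x2:ℝ) (y:ℝ) ∉ D) ∨
          (mk2 (x2:ℝ) (y:ℝ) ∈ D ∧ mk2 (x1:ℝ) (y:ℝ) ∉ D) := by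
      intro x1 x2 y hx1 hx2n hy1 hym hlt
      have hx21 : 1 ≤ x2 := by omega
      have hmem1 := fun k (hk : k < N) => mem_diskC N m t hN1 ht0 ht4 hR hL k x1 y hk hx1 hy1 hym
      have hmem2 := fun k (hk : k < N) => mem_diskC N m t hN1 ht0 ht4 hR hL k x2 y hk hx21 hy1 hym
      by_cases hA : x2 ≤ N
      · refine ⟨diskC N m t (x2 - 1), hDmem _ (by omega), Or.inr ⟨?_, ?_⟩⟩
        · rw [hmem2 _ (by omega)]; omega
        · rw [hmem1 _ (by omega)]; omega
      · by_cases hB : N ≤ x1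
        · refine ⟨diskC N m t (x1 - N), hDmem _ (by omega), Or.inl ⟨?_, ?_⟩⟩
          · rw [hmem1 _ (by omega)]; omega
          · rw [hmem2 _ (by omega)]; omega
        · by_cases hC : x2 ≤ x1 + N
          · refine ⟨diskC N m t x1, hDmem _ (by omega), Or.inr ⟨?_, ?_⟩⟩
            · rw [hmem2 _ (by omega)]; omega
            · rw [hmem1 _ (by omega)]; omega
          · refine ⟨diskC N m t (x1 - 1), hDmem _ (by omega), Or.inl ⟨?_, ?_⟩⟩
            · rw [hmem1 _ (by omega)]; omega
            · rw [hmem2 _ (by omega)]; omega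
    intro p hp q hq hpq
    obtain ⟨x1, y1, hx11, hx12, hy11, hy12, rfl⟩ := hgrid p hp
    obtain ⟨x2, y2, hx21, hx22, hy21, hy22, rfl⟩ := hgrid q hq
    by_cases hy : y1 = y2
    · subst hy
      have hx : x1 ≠ x2 := by
        intro h
        exact hpq (by rw [h])
      rcases Nat.lt_or_ge x1 x2 with h | h
      · exact sepCol x1 x2 y1 hx11 hx22 hy11 hy12 h
      · have h' : x2 < x1 := by omega
        obtain ⟨D, hD, hsep⟩ := sepCol x2 x1 y1 hx21 hx12 hy11 hy12 h'
        exact ⟨D, hD, hsep.symm⟩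
    · rcases Nat.lt_or_ge y1 y2 with h | h
      · exact sepRow x1 y1 x2 y2 hy11 hy22 h
      · have h' : y2 < y1 := by omega
        obtain ⟨D, hD, hsep⟩ := sepRow x2 y2 x1 y1 hy21 hy12 h'
        exact ⟨D, hD, hsep.symm⟩
  · -- cardinality
    rw [h𝒟]
    have c1 := Finset.card_union_le
      ((Finset.range N).image (diskC N m t) ∪ {HupS})
      ((Finset.Ico 2 m).image (fun j : ℕ => HdnS ((j:ℝ) + 1/2)))
    have c2 := Finset.card_union_le ((Finset.range N).image (diskC N m t))
      ({HupS} : Finset (Set Pt))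
    have c3 := Finset.card_image_le (s := Finset.range N) (f := diskC N m t)
    have c4 := Finset.card_image_le (s := Finset.Ico 2 m)
      (f := fun j : ℕ => HdnS ((j:ℝ) + 1/2))
    simp only [Finset.card_range, Finset.card_singleton, Nat.card_Ico] at c1 c2 c3 c4
    omega

/- ======================= main theorem ======================= -/

/-- For `m ≥ 3` and `n ≥ m²/2 - 3`, the grid can be identified by at most
`⌈n/2⌉ + m - 1` disks or half-planes. -/
theorem grid_wide_upper_bound (m n : ℕ) (hm : 3 ≤ m) (hn : (m : ℝ) ^ 2 / 2 - 3 ≤ (n : ℝ)) :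
    ∃ 𝒟 : Finset (Set Pt), (∀ D ∈ 𝒟, IsDisk D ∨ IsHalfPlane D) ∧
      Identifies 𝒟 (gridPts m n) ∧ 𝒟.card ≤ (n + 1) / 2 + m - 1 := by
  have hmR : (3:ℝ) ≤ (m:ℝ) := by exact_mod_cast hm
  have hn2 : 2 ≤ n := by
    have h1 : (1:ℝ) < (n:ℝ) := by nlinarith
    exact_mod_cast Nat.one_lt_cast.mp h1
  set N := (n + 1) / 2 with hNdef
  have hN1 : 1 ≤ N := by omega
  have hnN : n ≤ 2 * N := by omega
  have hnNR : (n:ℝ) ≤ 2 * (N:ℝ) := by exact_mod_cast hnN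
  have hmn : (m:ℝ)^2 ≤ 2*(n:ℝ) + 6 := by linarith
  have hNR1 : (1:ℝ) ≤ (N:ℝ) := by exact_mod_cast hN1
  by_cases hsm : n ≤ 2
  · -- n = 2, m = 3, N = 1
    have hm4 : m < 4 := by
      by_contra h
      push_neg at h
      have h4 : (4:ℝ) ≤ (m:ℝ) := by exact_mod_cast h
      have hn5 : (5:ℝ) ≤ (n:ℝ) := by nlinarith
      have : (n:ℝ) ≤ 2 := by exact_mod_cast hsm
      linarith
    have hm3 : m = 3 := by omega
    obtain ⟨𝒟, h1, h2, h3⟩ := master m n N (1/4) hm hN1 hnN (by norm_num) le_rfl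
      (by rw [hm3]; push_cast; nlinarith)
      (by intro h2N; omega)
    exact ⟨𝒟, h1, h2, h3⟩
  · push_neg at hsm
    have hN2 : 2 ≤ N := by omega
    have hNR2 : (2:ℝ) ≤ (N:ℝ) := by exact_mod_cast hN2
    have hkey : ((m:ℝ) - 1)^2 < 4 * (N:ℝ) := by
      rcases Nat.lt_or_ge m 4 with h | h
      · have hm3 : m = 3 := by omega
        rw [hm3]; push_cast; nlinarith
      · have h4 : (4:ℝ) ≤ (m:ℝ) := by exact_mod_cast h
        nlinarith
    obtain ⟨𝒟, h1, h2, h3⟩ := master m n N 0 hm hN1 hnN le_rfl (by norm_num)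
      (by linarith) (by intro _; linarith)
    exact ⟨𝒟, h1, h2, h3⟩
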